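/- Let A be a block upper triangular Ñ × N matrix (row blocks ñ₁,...,ñ_M̃, column blocks n₁,...,n_M, blocks below the diagonal zero) of rank Ñ, and let Â be the matrix obtained from A by keeping only the diagonal blocks and setting all off-diagonal blocks to zero. If Â has rank Ñ, then for any choice of Ñ column indices such that the corresponding columns of Â are linearly independent, the corresponding columns of A are also linearly independent. -/

import Mathlib

/-- If the block-diagonal part `Ah` of a block upper triangular full-rank matrix
`A` has full rank, then any `Nt` columns of `Ah` that are linearly independent
correspond to linearly independent columns of `A`. -/
theorem stmt_4 {N Nt M Mt : ℕ} (A Ah : Matrix (Fin Nt) (Fin N) ℝ)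
    (rdeg : Fin Nt → ℕ) (cdeg : Fin N → ℕ)
    (hr : ∀ i, 1 ≤ rdeg i ∧ rdeg i ≤ Mt) (hc : ∀ j, 1 ≤ cdeg j ∧ cdeg j ≤ M)
    (hMM : Mt ≤ M)
    (htri : ∀ i j, cdeg j < rdeg i → A i j = 0)
    (hAh : ∀ i j, Ah i j = if rdeg i = cdeg j then A i j else 0)
    (hrankA : A.rank = Nt) (hrankAh : Ah.rank = Nt) :
    ∀ s : Finset (Fin N), s.card = Nt →
      LinearIndependent ℝ (fun j : s => Ah.transpose (j : Fin N)) →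
      LinearIndependent ℝ (fun j : s => A.transpose (j : Fin N)) := by
  intro s hcard hAhind
  rw [Fintype.linearIndependent_iff] at hAhind ⊢
  intro g hg
  have hg' : ∀ i, ∑ j : s, g j * A i (j : Fin N) = 0 := by
    intro i
    have := congrFun hg i
    simpa [Finset.sum_apply, Matrix.transpose_apply] using this
  have main : ∀ t : ℕ, ∀ j : s, M < cdeg (j : Fin N) + t → g j = 0 := by
    intro t
    induction t with
    | zero =>
      intro j hj
      exact absurd hj (by have := (hc j).2; omega)
    | succ t ih =>
      intro j₀ hj₀
      set k := cdeg (j₀ : Fin N) with hk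
      have hsum : ∑ j : s, (if cdeg (j : Fin N) = k then g j else 0) •
          Ah.transpose (j : Fin N) = 0 := by
        funext i
        simp only [Finset.sum_apply, Pi.smul_apply, Matrix.transpose_apply,
          smul_eq_mul, Pi.zero_apply]
        by_cases hik : rdeg i = k
        · have step : ∑ j : s, (if cdeg (j : Fin N) = k then g j else 0) * Ah i (j : Fin N)
              = ∑ j : s, g j * A i (j : Fin N) := by
            apply Finset.sum_congr rfl
            intro j _
            rcases lt_trichotomy (cdeg (j : Fin N)) k with hlt | heq | hgt
            · have h1 : A i (j : Fin N) = 0 := htri i j (by omega)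
              have h2 : ¬ (cdeg (j : Fin N) = k) := by omega
              simp [h1, h2]
            · have h1 : Ah i (j : Fin N) = A i (j : Fin N) := by
                rw [hAh]; exact if_pos (by omega)
              simp [heq, h1]
            · have h1 : g j = 0 := ih j (by omega)
              have h2 : ¬ (cdeg (j : Fin N) = k) := by omega
              simp [h1, h2]
          rw [step, hg' i]
        · apply Finset.sum_eq_zero
          intro j _
          by_cases hjk : cdeg (j : Fin N) = k
          · have h1 : Ah i (j : Fin N) = 0 := by
              rw [hAh]; exact if_neg (by omega)
            simp [h1]
          · simp [hjk]
      have := hAhind _ hsum j₀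
      simpa [hk] using this
  intro j
  exact main (M + 1) j (by have := (hc j).1; omega)
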